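/- Let D be an oriented graph whose Hermitian adjacency matrix H_{π/3}(D) has spectrum symmetric about 0. Then the number of transitive triangles in D equals twice the number of directed triangles in D. -/

import Mathlib

open Matrix

lemma triple_split (n : ℕ) (f : Fin n × Fin n × Fin n → ℂ)
    (hdeg : ∀ p : Fin n × Fin n × Fin n,
      p.1 = p.2.1 ∨ p.2.1 = p.2.2 ∨ p.1 = p.2.2 → f p = 0) :
    ∑ p : Fin n × Fin n × Fin n, f p
      = ∑ p ∈ Finset.univ.filter
          (fun p : Fin n × Fin n × Fin n => p.1 < p.2.1 ∧ p.2.1 < p.2.2),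
          (f (p.1, p.2.1, p.2.2) + f (p.1, p.2.2, p.2.1) + f (p.2.1, p.1, p.2.2)
           + f (p.2.1, p.2.2, p.1) + f (p.2.2, p.1, p.2.1) + f (p.2.2, p.2.1, p.1)) := by
  classical
  have hsplitp : ∀ p : Fin n × Fin n × Fin n, f p =
      (if p.1 < p.2.1 ∧ p.2.1 < p.2.2 then f p else 0)
    + ((if p.1 < p.2.2 ∧ p.2.2 < p.2.1 then f p else 0)
    + ((if p.2.1 < p.1 ∧ p.1 < p.2.2 then f p else 0)
    + ((if p.2.1 < p.2.2 ∧ p.2.2 < p.1 then f p else 0)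
    + ((if p.2.2 < p.1 ∧ p.1 < p.2.1 then f p else 0)
    + (if p.2.2 < p.2.1 ∧ p.2.1 < p.1 then f p else 0))))) := by
    rintro ⟨a, b, c⟩
    by_cases hd : a = b ∨ b = c ∨ a = c
    · rw [hdeg _ hd]; rcases hd with h | h | h <;> subst h <;> simp
    · push_neg at hd
      obtain ⟨h1, h2, h3⟩ := hd
      rcases h1.lt_or_gt with h1 | h1 <;> rcases h2.lt_or_gt with h2 | h2 <;>
        rcases h3.lt_or_gt with h3 | h3
      · rw [if_pos (⟨h1, h2⟩ : a < b ∧ b < c), if_neg (by omega : ¬(a < c ∧ c < b)),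
          if_neg (by omega : ¬(b < a ∧ a < c)), if_neg (by omega : ¬(b < c ∧ c < a)),
          if_neg (by omega : ¬(c < a ∧ a < b)), if_neg (by omega : ¬(c < b ∧ b < a))]; ring
      · omega
      · rw [if_neg (by omega : ¬(a < b ∧ b < c)), if_pos (⟨h3, h2⟩ : a < c ∧ c < b),
          if_neg (by omega : ¬(b < a ∧ a < c)), if_neg (by omega : ¬(b < c ∧ c < a)),
          if_neg (by omega : ¬(c < a ∧ a < b)), if_neg (by omega : ¬(c < b ∧ b < a))]; ring
      · rw [if_neg (by omega : ¬(a < b ∧ b < c)), if_neg (by omega : ¬(a < c ∧ c < b)),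
          if_neg (by omega : ¬(b < a ∧ a < c)), if_neg (by omega : ¬(b < c ∧ c < a)),
          if_pos (⟨h3, h1⟩ : c < a ∧ a < b), if_neg (by omega : ¬(c < b ∧ b < a))]; ring
      · rw [if_neg (by omega : ¬(a < b ∧ b < c)), if_neg (by omega : ¬(a < c ∧ c < b)),
          if_pos (⟨h1, h3⟩ : b < a ∧ a < c), if_neg (by omega : ¬(b < c ∧ c < a)),
          if_neg (by omega : ¬(c < a ∧ a < b)), if_neg (by omega : ¬(c < b ∧ b < a))]; ring
      · rw [if_neg (by omega : ¬(a < b ∧ b < c)), if_neg (by omega : ¬(a < c ∧ c < b)),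
          if_neg (by omega : ¬(b < a ∧ a < c)), if_pos (⟨h2, h3⟩ : b < c ∧ c < a),
          if_neg (by omega : ¬(c < a ∧ a < b)), if_neg (by omega : ¬(c < b ∧ b < a))]; ring
      · omega
      · rw [if_neg (by omega : ¬(a < b ∧ b < c)), if_neg (by omega : ¬(a < c ∧ c < b)),
          if_neg (by omega : ¬(b < a ∧ a < c)), if_neg (by omega : ¬(b < c ∧ c < a)),
          if_neg (by omega : ¬(c < a ∧ a < b)), if_pos (⟨h2, h1⟩ : c < b ∧ b < a)]; ring
  calc ∑ p : Fin n × Fin n × Fin n, f p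
      = ∑ p : Fin n × Fin n × Fin n,
        ((if p.1 < p.2.1 ∧ p.2.1 < p.2.2 then f p else 0)
        + ((if p.1 < p.2.2 ∧ p.2.2 < p.2.1 then f p else 0)
        + ((if p.2.1 < p.1 ∧ p.1 < p.2.2 then f p else 0)
        + ((if p.2.1 < p.2.2 ∧ p.2.2 < p.1 then f p else 0)
        + ((if p.2.2 < p.1 ∧ p.1 < p.2.1 then f p else 0)
        + (if p.2.2 < p.2.1 ∧ p.2.1 < p.1 then f p else 0)))))) :=
        Finset.sum_congr rfl fun p _ => hsplitp p
    _ = _ := by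
        rw [Finset.sum_add_distrib, Finset.sum_add_distrib, Finset.sum_add_distrib,
          Finset.sum_add_distrib, Finset.sum_add_distrib]
        have e1 : (∑ p : Fin n × Fin n × Fin n, if p.1 < p.2.1 ∧ p.2.1 < p.2.2 then f p else 0)
            = ∑ p ∈ Finset.univ.filter
                (fun p : Fin n × Fin n × Fin n => p.1 < p.2.1 ∧ p.2.1 < p.2.2),
                f (p.1, p.2.1, p.2.2) := by
          rw [← Finset.sum_filter]
        have e2 : (∑ p : Fin n × Fin n × Fin n, if p.1 < p.2.2 ∧ p.2.2 < p.2.1 then f p else 0)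
            = ∑ p ∈ Finset.univ.filter
                (fun p : Fin n × Fin n × Fin n => p.1 < p.2.1 ∧ p.2.1 < p.2.2),
                f (p.1, p.2.2, p.2.1) := by
          rw [← Finset.sum_filter]
          refine Finset.sum_nbij' (fun p => (p.1, p.2.2, p.2.1)) (fun p => (p.1, p.2.2, p.2.1))
            ?_ ?_ ?_ ?_ ?_ <;> rintro ⟨x, y, z⟩ hp <;>
            simp only [Finset.mem_filter, Finset.mem_univ, true_and] at hp ⊢ <;>
            first | rfl | exact hp | exact ⟨hp.1, hp.2⟩ | exact ⟨hp.2, hp.1⟩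
        have e3 : (∑ p : Fin n × Fin n × Fin n, if p.2.1 < p.1 ∧ p.1 < p.2.2 then f p else 0)
            = ∑ p ∈ Finset.univ.filter
                (fun p : Fin n × Fin n × Fin n => p.1 < p.2.1 ∧ p.2.1 < p.2.2),
                f (p.2.1, p.1, p.2.2) := by
          rw [← Finset.sum_filter]
          refine Finset.sum_nbij' (fun p => (p.2.1, p.1, p.2.2)) (fun p => (p.2.1, p.1, p.2.2))
            ?_ ?_ ?_ ?_ ?_ <;> rintro ⟨x, y, z⟩ hp <;>
            simp only [Finset.mem_filter, Finset.mem_univ, true_and] at hp ⊢ <;>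
            first | rfl | exact hp | exact ⟨hp.1, hp.2⟩ | exact ⟨hp.2, hp.1⟩
        have e4 : (∑ p : Fin n × Fin n × Fin n, if p.2.1 < p.2.2 ∧ p.2.2 < p.1 then f p else 0)
            = ∑ p ∈ Finset.univ.filter
                (fun p : Fin n × Fin n × Fin n => p.1 < p.2.1 ∧ p.2.1 < p.2.2),
                f (p.2.2, p.1, p.2.1) := by
          rw [← Finset.sum_filter]
          refine Finset.sum_nbij' (fun p => (p.2.1, p.2.2, p.1)) (fun p => (p.2.2, p.1, p.2.1))
            ?_ ?_ ?_ ?_ ?_ <;> rintro ⟨x, y, z⟩ hp <;>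
            simp only [Finset.mem_filter, Finset.mem_univ, true_and] at hp ⊢ <;>
            first | rfl | exact hp | exact ⟨hp.1, hp.2⟩ | exact ⟨hp.2, hp.1⟩
        have e5 : (∑ p : Fin n × Fin n × Fin n, if p.2.2 < p.1 ∧ p.1 < p.2.1 then f p else 0)
            = ∑ p ∈ Finset.univ.filter
                (fun p : Fin n × Fin n × Fin n => p.1 < p.2.1 ∧ p.2.1 < p.2.2),
                f (p.2.1, p.2.2, p.1) := by
          rw [← Finset.sum_filter]
          refine Finset.sum_nbij' (fun p => (p.2.2, p.1, p.2.1)) (fun p => (p.2.1, p.2.2, p.1))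
            ?_ ?_ ?_ ?_ ?_ <;> rintro ⟨x, y, z⟩ hp <;>
            simp only [Finset.mem_filter, Finset.mem_univ, true_and] at hp ⊢ <;>
            first | rfl | exact hp | exact ⟨hp.1, hp.2⟩ | exact ⟨hp.2, hp.1⟩
        have e6 : (∑ p : Fin n × Fin n × Fin n, if p.2.2 < p.2.1 ∧ p.2.1 < p.1 then f p else 0)
            = ∑ p ∈ Finset.univ.filter
                (fun p : Fin n × Fin n × Fin n => p.1 < p.2.1 ∧ p.2.1 < p.2.2),
                f (p.2.2, p.2.1, p.1) := by
          rw [← Finset.sum_filter]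
          refine Finset.sum_nbij' (fun p => (p.2.2, p.2.1, p.1)) (fun p => (p.2.2, p.2.1, p.1))
            ?_ ?_ ?_ ?_ ?_ <;> rintro ⟨x, y, z⟩ hp <;>
            simp only [Finset.mem_filter, Finset.mem_univ, true_and] at hp ⊢ <;>
            first | rfl | exact hp | exact ⟨hp.1, hp.2⟩ | exact ⟨hp.2, hp.1⟩
        rw [e1, e2, e3, e4, e5, e6, ← Finset.sum_add_distrib, ← Finset.sum_add_distrib,
          ← Finset.sum_add_distrib, ← Finset.sum_add_distrib, ← Finset.sum_add_distrib]
        exact Finset.sum_congr rfl fun p _ => by ring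

lemma triangle_value (n : ℕ) (arc : Fin n → Fin n → Prop) [DecidableRel arc]
    (hasym : ∀ u v, arc u v → ¬ arc v u)
    (H : Matrix (Fin n) (Fin n) ℂ) (z w : ℂ)
    (hmul : z * w = 1) (hsum : z + w = 1)
    (hH : ∀ u v, H u v = if arc u v then z else if arc v u then w else 0)
    (a b c : Fin n) :
    (H a b * H b c * H c a + H a c * H c b * H b a)
    + (H b a * H a c * H c b + H b c * H c a * H a b)
    + (H c a * H a b * H b c + H c b * H b a * H a c)
    = (if (arc a b ∨ arc b a) ∧ (arc b c ∨ arc c b) ∧ (arc a c ∨ arc c a) ∧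
        ¬ ((arc a b ∧ arc b c ∧ arc c a) ∨ (arc b a ∧ arc c b ∧ arc a c)) then (3:ℂ) else 0)
    + (if (arc a b ∧ arc b c ∧ arc c a) ∨ (arc b a ∧ arc c b ∧ arc a c) then (-6:ℂ) else 0) := by
  have hab := hasym a b
  have hbc := hasym b c
  have hac := hasym a c
  by_cases h1 : arc a b <;> by_cases h1' : arc b a <;>
    by_cases h2 : arc b c <;> by_cases h2' : arc c b <;>
    by_cases h3 : arc a c <;> by_cases h3' : arc c a <;>
    first
      | exact absurd h1' (hab h1)
      | exact absurd h2' (hbc h2)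
      | exact absurd h3' (hac h3)
      | (simp only [hH, h1, h1', h2, h2', h3, h3', if_true, if_false, ite_true, ite_false,
          or_true, true_or, or_false, false_or, and_true, true_and, and_false, false_and,
          not_true, not_false_iff, or_self, if_pos, if_neg, not_false_eq_true]
         <;> first
           | ring1
           | linear_combination (3*(z+w))*hmul + 3*hsum
           | linear_combination (-9*(z+w))*hmul + (3*(z+w)^2+3*(z+w)-6)*hsum)

/-- If an oriented graph `D` has `H_{π/3}(D)` with spectrum symmetric about 0,
then the number of transitive triangles equals twice the number of directed
triangles. -/
theorem stmt_5 (n : ℕ) (arc : Fin n → Fin n → Prop) [DecidableRel arc]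
    (hasym : ∀ u v, arc u v → ¬ arc v u)
    (H : Matrix (Fin n) (Fin n) ℂ)
    (hH : ∀ u v, H u v =
      if arc u v then Complex.exp ((Real.pi / 3 : ℝ) * Complex.I)
      else if arc v u then Complex.exp (-((Real.pi / 3 : ℝ) * Complex.I)) else 0)
    (hHerm : H.IsHermitian)
    (hsym : ∃ σ : Equiv.Perm (Fin n), ∀ i, hHerm.eigenvalues (σ i) = - hHerm.eigenvalues i) :
    (Finset.univ.filter (fun p : Fin n × Fin n × Fin n =>
      p.1 < p.2.1 ∧ p.2.1 < p.2.2 ∧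
      (arc p.1 p.2.1 ∨ arc p.2.1 p.1) ∧ (arc p.2.1 p.2.2 ∨ arc p.2.2 p.2.1) ∧
      (arc p.1 p.2.2 ∨ arc p.2.2 p.1) ∧
      ¬ ((arc p.1 p.2.1 ∧ arc p.2.1 p.2.2 ∧ arc p.2.2 p.1) ∨
         (arc p.2.1 p.1 ∧ arc p.2.2 p.2.1 ∧ arc p.1 p.2.2)))).card
    = 2 * (Finset.univ.filter (fun p : Fin n × Fin n × Fin n =>
      p.1 < p.2.1 ∧ p.2.1 < p.2.2 ∧
      ((arc p.1 p.2.1 ∧ arc p.2.1 p.2.2 ∧ arc p.2.2 p.1) ∨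
       (arc p.2.1 p.1 ∧ arc p.2.2 p.2.1 ∧ arc p.1 p.2.2)))).card := by
  classical
  -- the two roots
  set z : ℂ := Complex.exp ((Real.pi / 3 : ℝ) * Complex.I)
  set w : ℂ := Complex.exp (-((Real.pi / 3 : ℝ) * Complex.I))
  have hmul : z * w = 1 := by rw [← Complex.exp_add]; simp
  have hsum : z + w = 1 := by
    have h : Complex.cos ((Real.pi / 3 : ℝ) : ℂ)
        = (Complex.exp (((Real.pi/3:ℝ):ℂ) * Complex.I)
          + Complex.exp (-(((Real.pi/3:ℝ):ℂ) * Complex.I))) / 2 := by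
      rw [Complex.cos]; ring_nf
    have h2 : Complex.cos ((Real.pi / 3 : ℝ) : ℂ) = ((1:ℝ)/2 : ℝ) := by
      rw [← Complex.ofReal_cos, Real.cos_pi_div_three]
    rw [h2] at h
    show Complex.exp ((Real.pi / 3 : ℝ) * Complex.I)
        + Complex.exp (-((Real.pi / 3 : ℝ) * Complex.I)) = 1
    push_cast at h ⊢
    linear_combination (-2 : ℂ) * h
  have hdiag : ∀ u : Fin n, H u u = 0 := by
    intro u
    have hu : ¬ arc u u := fun h => hasym u u h h
    rw [hH u u, if_neg hu, if_neg hu]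
  -- trace of H^3 vanishes
  have htr0 : (H*H*H).trace = 0 := by
    have hUU : star (hHerm.eigenvectorUnitary : Matrix (Fin n) (Fin n) ℂ) *
        (hHerm.eigenvectorUnitary : Matrix (Fin n) (Fin n) ℂ) = 1 := by
      exact_mod_cast hHerm.eigenvectorUnitary.2.1
    set U : Matrix (Fin n) (Fin n) ℂ := (hHerm.eigenvectorUnitary : Matrix (Fin n) (Fin n) ℂ)
      with hU
    set D : Matrix (Fin n) (Fin n) ℂ := diagonal (RCLike.ofReal ∘ hHerm.eigenvalues) with hD
    have htr : (H*H*H).trace = ∑ i, ((hHerm.eigenvalues i : ℝ) : ℂ)^3 := by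
      have h3 : H*H*H = U * (D*D*D) * star U := by
        conv_lhs => rw [hHerm.spectral_theorem]
        simp only [Unitary.conjStarAlgAut_apply, ← hU, ← hD, Matrix.mul_assoc]
        rw [show star U * (U * (D * (star U * (U * (D * star U))))) = D * (D * star U) by
          rw [← Matrix.mul_assoc (star U) U, hUU, Matrix.one_mul,
              ← Matrix.mul_assoc (star U) U, hUU, Matrix.one_mul]]
      rw [h3, Matrix.trace_mul_comm, ← Matrix.mul_assoc, hUU, Matrix.one_mul]
      simp [hD, Matrix.diagonal_mul_diagonal, Matrix.trace_diagonal, pow_succ, mul_assoc]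
    rw [htr]
    obtain ⟨σ, hσ⟩ := hsym
    have h := Equiv.sum_comp σ (fun i => ((hHerm.eigenvalues i : ℝ) : ℂ)^3)
    simp only [hσ] at h
    have h2 : -∑ i : Fin n, ((hHerm.eigenvalues i : ℝ) : ℂ)^3
        = ∑ i : Fin n, ((hHerm.eigenvalues i : ℝ) : ℂ)^3 := by
      calc -∑ i : Fin n, ((hHerm.eigenvalues i : ℝ) : ℂ)^3
          = ∑ x : Fin n, ((-hHerm.eigenvalues x : ℝ) : ℂ)^3 := by
            rw [← Finset.sum_neg_distrib]
            exact Finset.sum_congr rfl fun x _ => by push_cast; ring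
        _ = _ := h
    linear_combination (-1/2 : ℂ) * h2
  -- trace as a sum over ordered triples
  have htr1 : (H*H*H).trace
      = ∑ p : Fin n × Fin n × Fin n, H p.1 p.2.1 * H p.2.1 p.2.2 * H p.2.2 p.1 := by
    simp only [Matrix.trace, Matrix.diag, Matrix.mul_apply, Finset.sum_mul, Finset.mul_sum,
      Fintype.sum_prod_type]
    rw [Finset.sum_congr rfl fun u _ => Finset.sum_comm]
  -- combinatorial reduction
  have hsplit := triple_split n
    (fun p => H p.1 p.2.1 * H p.2.1 p.2.2 * H p.2.2 p.1)
    (by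
      rintro ⟨a, b, c⟩ (h | h | h) <;> simp only at h <;> subst h <;>
        simp [hdiag])
  have hval : ∀ p ∈ Finset.univ.filter
      (fun p : Fin n × Fin n × Fin n => p.1 < p.2.1 ∧ p.2.1 < p.2.2),
      ((fun p : Fin n × Fin n × Fin n => H p.1 p.2.1 * H p.2.1 p.2.2 * H p.2.2 p.1)
          (p.1, p.2.1, p.2.2)
        + (fun p : Fin n × Fin n × Fin n => H p.1 p.2.1 * H p.2.1 p.2.2 * H p.2.2 p.1)
          (p.1, p.2.2, p.2.1)
        + (fun p : Fin n × Fin n × Fin n => H p.1 p.2.1 * H p.2.1 p.2.2 * H p.2.2 p.1)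
          (p.2.1, p.1, p.2.2)
        + (fun p : Fin n × Fin n × Fin n => H p.1 p.2.1 * H p.2.1 p.2.2 * H p.2.2 p.1)
          (p.2.1, p.2.2, p.1)
        + (fun p : Fin n × Fin n × Fin n => H p.1 p.2.1 * H p.2.1 p.2.2 * H p.2.2 p.1)
          (p.2.2, p.1, p.2.1)
        + (fun p : Fin n × Fin n × Fin n => H p.1 p.2.1 * H p.2.1 p.2.2 * H p.2.2 p.1)
          (p.2.2, p.2.1, p.1))
      = (if (arc p.1 p.2.1 ∨ arc p.2.1 p.1) ∧ (arc p.2.1 p.2.2 ∨ arc p.2.2 p.2.1) ∧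
            (arc p.1 p.2.2 ∨ arc p.2.2 p.1) ∧
            ¬ ((arc p.1 p.2.1 ∧ arc p.2.1 p.2.2 ∧ arc p.2.2 p.1) ∨
               (arc p.2.1 p.1 ∧ arc p.2.2 p.2.1 ∧ arc p.1 p.2.2)) then (3:ℂ) else 0)
        + (if (arc p.1 p.2.1 ∧ arc p.2.1 p.2.2 ∧ arc p.2.2 p.1) ∨
             (arc p.2.1 p.1 ∧ arc p.2.2 p.2.1 ∧ arc p.1 p.2.2) then (-6:ℂ) else 0) := by
    rintro ⟨a, b, c⟩ _
    have := triangle_value n arc hasym H z w hmul hsum hH a b c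
    simp only
    linear_combination this
  have hzero : (0:ℂ)
      = ∑ p ∈ Finset.univ.filter
          (fun p : Fin n × Fin n × Fin n => p.1 < p.2.1 ∧ p.2.1 < p.2.2),
        ((if (arc p.1 p.2.1 ∨ arc p.2.1 p.1) ∧ (arc p.2.1 p.2.2 ∨ arc p.2.2 p.2.1) ∧
            (arc p.1 p.2.2 ∨ arc p.2.2 p.1) ∧
            ¬ ((arc p.1 p.2.1 ∧ arc p.2.1 p.2.2 ∧ arc p.2.2 p.1) ∨
               (arc p.2.1 p.1 ∧ arc p.2.2 p.2.1 ∧ arc p.1 p.2.2)) then (3:ℂ) else 0)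
        + (if (arc p.1 p.2.1 ∧ arc p.2.1 p.2.2 ∧ arc p.2.2 p.1) ∨
             (arc p.2.1 p.1 ∧ arc p.2.2 p.2.1 ∧ arc p.1 p.2.2) then (-6:ℂ) else 0)) := by
    rw [← Finset.sum_congr rfl hval, ← hsplit, ← htr1, htr0]
  rw [Finset.sum_add_distrib, ← Finset.sum_filter, ← Finset.sum_filter,
    Finset.sum_const, Finset.sum_const, Finset.filter_filter, Finset.filter_filter]
    at hzero
  have hT : Finset.univ.filter
      (fun p : Fin n × Fin n × Fin n => (p.1 < p.2.1 ∧ p.2.1 < p.2.2) ∧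
        (arc p.1 p.2.1 ∨ arc p.2.1 p.1) ∧ (arc p.2.1 p.2.2 ∨ arc p.2.2 p.2.1) ∧
        (arc p.1 p.2.2 ∨ arc p.2.2 p.1) ∧
        ¬ ((arc p.1 p.2.1 ∧ arc p.2.1 p.2.2 ∧ arc p.2.2 p.1) ∨
           (arc p.2.1 p.1 ∧ arc p.2.2 p.2.1 ∧ arc p.1 p.2.2)))
      = Finset.univ.filter (fun p : Fin n × Fin n × Fin n =>
        p.1 < p.2.1 ∧ p.2.1 < p.2.2 ∧
        (arc p.1 p.2.1 ∨ arc p.2.1 p.1) ∧ (arc p.2.1 p.2.2 ∨ arc p.2.2 p.2.1) ∧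
        (arc p.1 p.2.2 ∨ arc p.2.2 p.1) ∧
        ¬ ((arc p.1 p.2.1 ∧ arc p.2.1 p.2.2 ∧ arc p.2.2 p.1) ∨
           (arc p.2.1 p.1 ∧ arc p.2.2 p.2.1 ∧ arc p.1 p.2.2))) :=
    Finset.filter_congr fun p _ => by tauto
  have hD2 : Finset.univ.filter
      (fun p : Fin n × Fin n × Fin n => (p.1 < p.2.1 ∧ p.2.1 < p.2.2) ∧
        ((arc p.1 p.2.1 ∧ arc p.2.1 p.2.2 ∧ arc p.2.2 p.1) ∨
         (arc p.2.1 p.1 ∧ arc p.2.2 p.2.1 ∧ arc p.1 p.2.2)))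
      = Finset.univ.filter (fun p : Fin n × Fin n × Fin n =>
        p.1 < p.2.1 ∧ p.2.1 < p.2.2 ∧
        ((arc p.1 p.2.1 ∧ arc p.2.1 p.2.2 ∧ arc p.2.2 p.1) ∨
         (arc p.2.1 p.1 ∧ arc p.2.2 p.2.1 ∧ arc p.1 p.2.2))) :=
    Finset.filter_congr fun p _ => by tauto
  rw [hT, hD2] at hzero
  simp only [nsmul_eq_mul] at hzero
  have hfin : ((Finset.univ.filter (fun p : Fin n × Fin n × Fin n =>
      p.1 < p.2.1 ∧ p.2.1 < p.2.2 ∧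
      (arc p.1 p.2.1 ∨ arc p.2.1 p.1) ∧ (arc p.2.1 p.2.2 ∨ arc p.2.2 p.2.1) ∧
      (arc p.1 p.2.2 ∨ arc p.2.2 p.1) ∧
      ¬ ((arc p.1 p.2.1 ∧ arc p.2.1 p.2.2 ∧ arc p.2.2 p.1) ∨
         (arc p.2.1 p.1 ∧ arc p.2.2 p.2.1 ∧ arc p.1 p.2.2)))).card : ℂ)
      = 2 * ((Finset.univ.filter (fun p : Fin n × Fin n × Fin n =>
      p.1 < p.2.1 ∧ p.2.1 < p.2.2 ∧
      ((arc p.1 p.2.1 ∧ arc p.2.1 p.2.2 ∧ arc p.2.2 p.1) ∨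
       (arc p.2.1 p.1 ∧ arc p.2.2 p.2.1 ∧ arc p.1 p.2.2)))).card : ℂ) := by
    linear_combination (-1/3 : ℂ) * hzero
  exact_mod_cast hfin
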